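/- Let G be a group acting on a field K by field automorphisms, and let U ≤ G be a subgroup such that (a) {g ∈ G | g U g⁻¹ ⊆ U} = U, and (b) for every g ∉ U the index [U : U ∩ gUg⁻¹] is infinite. Let K⟨G/U⟩ be the free K-module on the coset space G/U with the semilinear action σ•(c·[gU]) = (σ•c)·[σgU]. For f ∈ K^U define φ_f : K⟨G/U⟩ → K⟨G/U⟩ by φ_f(c·[gU]) = c·(g•f)·[gU] (well-defined since f is U-fixed). Then f ↦ φ_f is a ring isomorphism from the fixed field K^U onto the ring of K-linear G-equivariant endomorphisms of K⟨G/U⟩; in particular, K⟨G/U⟩ is indecomposable: it is not the direct sum of two nonzero G-stable K-subspaces. -/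

import Mathlib

/-- The semilinear action of `σ : G` on the free `K`-module `K⟨G/U⟩`:
`σ • (c·[gU]) = (σ•c)·[σgU]`. -/
noncomputable def cosetAct {K G : Type} [Field K] [Group G] (U : Subgroup G)
    (act : G →* (K ≃+* K)) (σ : G) (x : (G ⧸ U) →₀ K) : (G ⧸ U) →₀ K :=
  Finsupp.mapDomain (fun q : G ⧸ U => σ • q) (x.mapRange (act σ) (map_zero _))

/-- For `f ∈ K^U`, the endomorphism `φ_f` of `K⟨G/U⟩` with
`φ_f (c·[gU]) = c·(g•f)·[gU]`.  (For `f` fixed by `U` the value `g•f` does not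
depend on the representative `g` of the coset `gU`, so using the chosen
representative `Quotient.out q` realizes exactly the intended map.) -/
noncomputable def diagMul {K G : Type} [Field K] [Group G] (U : Subgroup G)
    (act : G →* (K ≃+* K)) (f : K) (x : (G ⧸ U) →₀ K) : (G ⧸ U) →₀ K :=
  x.sum fun q c => Finsupp.single q (c * act q.out f)

/-- The predicate: `ψ` is a `K`-linear `G`-equivariant endomorphism of `K⟨G/U⟩`. -/
def IsEquivEnd {K G : Type} [Field K] [Group G] (U : Subgroup G)
    (act : G →* (K ≃+* K)) (ψ : ((G ⧸ U) →₀ K) → ((G ⧸ U) →₀ K)) : Prop :=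
  (∀ x y, ψ (x + y) = ψ x + ψ y) ∧
  (∀ (c : K) (x), ψ (c • x) = c • ψ x) ∧
  (∀ (σ : G) (x), ψ (cosetAct U act σ x) = cosetAct U act σ (ψ x))


section helpers
variable {K G : Type} [Field K] [Group G] (U : Subgroup G) (act : G →* (K ≃+* K))

lemma cosetAct_single (σ : G) (q : G ⧸ U) (c : K) :
    cosetAct U act σ (Finsupp.single q c) = Finsupp.single (σ • q) (act σ c) := by
  simp [cosetAct, Finsupp.mapRange_single, Finsupp.mapDomain_single]

lemma cosetAct_zero (σ : G) : cosetAct U act σ (0 : (G ⧸ U) →₀ K) = 0 := by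
  simp [cosetAct]

lemma cosetAct_add (σ : G) (x y : (G ⧸ U) →₀ K) :
    cosetAct U act σ (x + y) = cosetAct U act σ x + cosetAct U act σ y := by
  unfold cosetAct
  rw [Finsupp.mapRange_add (map_add _), Finsupp.mapDomain_add]

lemma cosetAct_smul (σ : G) (c : K) (x : (G ⧸ U) →₀ K) :
    cosetAct U act σ (c • x) = act σ c • cosetAct U act σ x := by
  unfold cosetAct
  have : (c • x).mapRange (act σ) (map_zero _) = act σ c • x.mapRange (act σ) (map_zero _) := by
    ext q; simp [Finsupp.mapRange_apply, map_mul]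
  rw [this, Finsupp.mapDomain_smul]

lemma act_eq_of_mk_eq {f : K} (hf : ∀ u ∈ U, act u f = f) {g h : G}
    (hgh : (g : G ⧸ U) = (h : G ⧸ U)) : act g f = act h f := by
  rw [QuotientGroup.eq] at hgh
  have hh : h = g * (g⁻¹ * h) := by group
  rw [hh, map_mul]
  show act g f = act g (act (g⁻¹ * h) f)
  rw [hf _ hgh]

lemma diagMul_single (f : K) (q : G ⧸ U) (c : K) :
    diagMul U act f (Finsupp.single q c) = Finsupp.single q (c * act q.out f) := by
  rw [diagMul, Finsupp.sum_single_index]; simp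

lemma diagMul_zero (f : K) : diagMul U act f (0 : (G ⧸ U) →₀ K) = 0 := by
  simp [diagMul]

lemma diagMul_add (f : K) (x y : (G ⧸ U) →₀ K) :
    diagMul U act f (x + y) = diagMul U act f x + diagMul U act f y := by
  unfold diagMul
  rw [Finsupp.sum_add_index'] <;> intros <;> simp [add_mul, Finsupp.single_add]

lemma diagMul_smul (f : K) (c : K) (x : (G ⧸ U) →₀ K) :
    diagMul U act f (c • x) = c • diagMul U act f x := by
  unfold diagMul
  rw [Finsupp.sum_smul_index (by intro i; simp), Finsupp.smul_sum]
  apply Finsupp.sum_congr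
  intro q _
  rw [Finsupp.smul_single', mul_assoc]

end helpers

section part2
variable {K G : Type} [Field K] [Group G] (U : Subgroup G) (act : G →* (K ≃+* K))

lemma mk_out_smul_one (q : G ⧸ U) : (q.out : G) • (((1:G) : G ⧸ U)) = q := by
  rw [MulAction.Quotient.smul_mk, smul_eq_mul, mul_one, QuotientGroup.out_eq']

lemma diagMul_isEquivEnd (f : K) (hf : ∀ u ∈ U, act u f = f) :
    IsEquivEnd U act (diagMul U act f) := by
  refine ⟨diagMul_add U act f, diagMul_smul U act f, ?_⟩
  intro σ x
  induction x using Finsupp.induction with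
  | zero => rw [cosetAct_zero, diagMul_zero, cosetAct_zero]
  | single_add q c x _ _ ih =>
    rw [cosetAct_add, diagMul_add, diagMul_add, cosetAct_add, ih,
      cosetAct_single, diagMul_single, diagMul_single, cosetAct_single]
    congr 1
    have h1 : ((σ • q).out : G ⧸ U) = ((σ * q.out : G) : G ⧸ U) := by
      rw [QuotientGroup.out_eq']
      have := MulAction.Quotient.smul_mk U σ q.out
      rw [smul_eq_mul] at this
      rw [← this, QuotientGroup.out_eq']
    rw [act_eq_of_mk_eq U act hf h1, map_mul]
    have h2 : (act σ * act (q.out)) f = act σ (act q.out f) := rfl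
    rw [h2, map_mul]

lemma one_out_mem : (((1:G) : G ⧸ U)).out ∈ U := by
  have h := QuotientGroup.out_eq' (((1:G) : G ⧸ U))
  have := QuotientGroup.eq.mp h
  simpa using this

lemma diagMul_injOn : Set.InjOn (diagMul U act) {f : K | ∀ u ∈ U, act u f = f} := by
  intro f hf f' hf' h
  have h1 := congrFun h (Finsupp.single (((1:G) : G ⧸ U)) 1)
  rw [diagMul_single, diagMul_single] at h1
  have h2 := DFunLike.congr_fun h1 (((1:G) : G ⧸ U))
  rw [Finsupp.single_eq_same, Finsupp.single_eq_same, one_mul, one_mul] at h2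
  rwa [hf _ (one_out_mem U), hf' _ (one_out_mem U)] at h2

lemma diagMul_addf (f f' : K) :
    diagMul U act (f + f') = fun x => diagMul U act f x + diagMul U act f' x := by
  funext x
  unfold diagMul
  rw [← Finsupp.sum_add]
  apply Finsupp.sum_congr
  intro q _
  rw [map_add, mul_add, Finsupp.single_add]

lemma diagMul_mulf (f f' : K) :
    diagMul U act (f * f') = diagMul U act f ∘ diagMul U act f' := by
  funext x
  induction x using Finsupp.induction with
  | zero => simp [diagMul_zero]
  | single_add q c x _ _ ih =>
    have hc : (diagMul U act f ∘ diagMul U act f') (Finsupp.single q c + x)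
        = Finsupp.single q (c * act q.out f' * act q.out f)
          + (diagMul U act f ∘ diagMul U act f') x := by
      simp only [Function.comp_apply, diagMul_add, diagMul_single]
    rw [hc, diagMul_add, diagMul_single, ih, map_mul]
    congr 1
    ring

lemma diagMul_onef : diagMul U act (1 : K) = id := by
  funext x
  unfold diagMul
  simp only [map_one, mul_one]
  rw [Finsupp.sum_single]
  rfl

end part2

section surj
variable {K G : Type} [Field K] [Group G] (U : Subgroup G) (act : G →* (K ≃+* K))

lemma equivEnd_eq_diagMul
    (hb : ∀ g : G, g ∉ U →
      (Subgroup.map (MulAut.conj g).toMonoidHom U).relIndex U = 0)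
    (ψ : ((G ⧸ U) →₀ K) → ((G ⧸ U) →₀ K)) (hψ : IsEquivEnd U act ψ) :
    ∃ f : K, (∀ u ∈ U, act u f = f) ∧ ψ = diagMul U act f := by
  obtain ⟨hadd, hsmul, hequiv⟩ := hψ
  have hz : ψ 0 = 0 := by
    have := hsmul 0 0
    simpa using this
  set e : (G ⧸ U) →₀ K := Finsupp.single (((1:G) : G ⧸ U)) 1 with he
  set y := ψ e with hy
  have hmk1 : ∀ u : G, u ∈ U → u • (((1:G) : G ⧸ U)) = ((1:G) : G ⧸ U) := by
    intro u hu
    rw [MulAction.Quotient.smul_mk, smul_eq_mul, mul_one]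
    exact QuotientGroup.eq.mpr (by simpa using inv_mem hu)
  have hinv : ∀ u ∈ U, cosetAct U act u y = y := by
    intro u hu
    have h1 : cosetAct U act u e = e := by
      rw [he, cosetAct_single, map_one, hmk1 u hu]
    rw [hy, ← hequiv, h1]
  have hsupp : y.support ⊆ {((1:G) : G ⧸ U)} := by
    intro q hq
    rw [Finset.mem_singleton]
    by_contra hq1
    have hgq : ((q.out : G) : G ⧸ U) = q := QuotientGroup.out_eq' q
    have hgU : (q.out : G) ∉ U := by
      intro hmem
      apply hq1
      rw [← hgq]
      rw [← hgq]
      exact QuotientGroup.eq.mpr (by simpa using inv_mem hmem)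
    set g := q.out with hg
    have hrel := hb g hgU
    set S := Subgroup.map (MulAut.conj g).toMonoidHom U with hS
    have hSmem : ∀ x : G, x ∈ S ↔ g⁻¹ * x * g ∈ U := by
      intro x
      simp only [hS, Subgroup.mem_map, MulEquiv.coe_toMonoidHom, MulAut.conj_apply]
      constructor
      · rintro ⟨w, hw, rfl⟩
        have hww : g⁻¹ * (g * w * g⁻¹) * g = w := by group
        rwa [hww]
      · intro hx
        exact ⟨g⁻¹ * x * g, hx, by group⟩
    have hcoef : ∀ u : G, u ∈ U → u • q ∈ y.support := by
      intro u hu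
      have h0 := hinv u hu
      have happ : (cosetAct U act u y) (u • q) = act u (y q) := by
        unfold cosetAct
        rw [Finsupp.mapDomain_apply (MulAction.injective u), Finsupp.mapRange_apply]
      rw [h0] at happ
      rw [Finsupp.mem_support_iff] at hq ⊢
      rw [happ]
      intro hcon
      exact hq (by simpa using (EmbeddingLike.map_eq_zero_iff (f := act u)).mp hcon)
    set stab := S.subgroupOf U with hstab
    have hkey : ∀ u v : U, ((QuotientGroup.mk u : U ⧸ stab) = QuotientGroup.mk v)
        ↔ (u : G) • q = (v : G) • q := by
      intro u v
      rw [QuotientGroup.eq, Subgroup.mem_subgroupOf, hSmem, ← hgq]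
      simp only [MulAction.Quotient.smul_mk, smul_eq_mul, QuotientGroup.eq]
      have hcoe : g⁻¹ * ((((u⁻¹ * v : U)) : G)) * g = ((u : G) * g)⁻¹ * ((v : G) * g) := by
        push_cast
        group
      rw [hcoe]
    let F : U ⧸ stab → {z // z ∈ y.support} := fun x =>
      Quotient.liftOn' x (fun u : U => (⟨(u : G) • q, hcoef u u.2⟩ : {z // z ∈ y.support}))
        (fun u v h => Subtype.ext ((hkey u v).mp (Quotient.sound' h)))
    have hinj : Function.Injective F := by
      intro x₁ x₂
      refine QuotientGroup.induction_on x₁ (fun u => QuotientGroup.induction_on x₂ (fun v hx => ?_))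
      exact (hkey u v).mpr (congrArg Subtype.val hx)
    have hfin : Finite (U ⧸ stab) := Finite.of_injective F hinj
    exact Subgroup.index_ne_zero_of_finite (hH := hfin) hrel
  have hy1 : y = Finsupp.single (((1:G) : G ⧸ U)) (y (((1:G) : G ⧸ U))) :=
    Finsupp.support_subset_singleton.mp hsupp
  set f := y (((1:G) : G ⧸ U)) with hf
  have hfix : ∀ u ∈ U, act u f = f := by
    intro u hu
    have h0 := hinv u hu
    rw [hy1, cosetAct_single, hmk1 u hu] at h0
    have h1 := DFunLike.congr_fun h0 (((1:G) : G ⧸ U))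
    simpa [Finsupp.single_eq_same] using h1
  refine ⟨f, hfix, ?_⟩
  funext x
  induction x using Finsupp.induction with
  | zero => rw [hz, diagMul_zero]
  | single_add q c x _ _ ih =>
    rw [hadd, diagMul_add, ih]
    congr 1
    set d := (act q.out).symm c with hd
    have h1 : Finsupp.single q c = cosetAct U act q.out (Finsupp.single (((1:G) : G ⧸ U)) d) := by
      rw [cosetAct_single, mk_out_smul_one, hd, RingEquiv.apply_symm_apply]
    have h2 : Finsupp.single (((1:G) : G ⧸ U)) d = d • e := by
      rw [he, Finsupp.smul_single', mul_one]
    have lhs : ψ (Finsupp.single q c) = Finsupp.single q (c * act q.out f) := by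
      rw [h1, hequiv, h2, hsmul, ← hy, hy1, Finsupp.smul_single', cosetAct_single, mk_out_smul_one,
        map_mul, hd, RingEquiv.apply_symm_apply]
    rw [lhs, diagMul_single]

end surj

/-- **`End_{K⟨G⟩}(K⟨G/U⟩) = K^U`; in particular `K⟨G/U⟩` is indecomposable.**
`G` acts on the field `K` via `act`; `U ≤ G` is self-normalizing in the strong
sense (a): `{g | gUg⁻¹ ⊆ U} = U`, and (b): for `g ∉ U` the index
`[U : U ∩ gUg⁻¹]` is infinite.  Then `f ↦ φ_f` is a ring isomorphism from the
fixed field `K^U` onto the ring of `K`-linear `G`-equivariant endomorphisms of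
`K⟨G/U⟩`, and `K⟨G/U⟩` is not a direct sum of two nonzero `G`-stable
`K`-subspaces. -/
theorem endomorphisms_of_coset_module_eq_fixed_field
    (K G : Type) [Field K] [Group G]
    (act : G →* (K ≃+* K)) (U : Subgroup G)
    (ha : {g : G | ∀ u ∈ U, g * u * g⁻¹ ∈ U} = (U : Set G))
    (hb : ∀ g : G, g ∉ U →
      (Subgroup.map (MulAut.conj g).toMonoidHom U).relIndex U = 0) :
    -- `φ_f` is a `K`-linear `G`-equivariant endomorphism for every `f ∈ K^U`
    (∀ f : K, (∀ u ∈ U, act u f = f) → IsEquivEnd U act (diagMul U act f)) ∧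
    -- `f ↦ φ_f` is injective on `K^U`
    Set.InjOn (diagMul U act) {f : K | ∀ u ∈ U, act u f = f} ∧
    -- `f ↦ φ_f` is surjective onto the equivariant endomorphisms
    (∀ ψ : ((G ⧸ U) →₀ K) → ((G ⧸ U) →₀ K), IsEquivEnd U act ψ →
      ∃ f : K, (∀ u ∈ U, act u f = f) ∧ ψ = diagMul U act f) ∧
    -- `f ↦ φ_f` is a ring homomorphism (addition, multiplication, unit)
    (∀ f f' : K, (∀ u ∈ U, act u f = f) → (∀ u ∈ U, act u f' = f') →
      diagMul U act (f + f') = (fun x => diagMul U act f x + diagMul U act f' x) ∧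
      diagMul U act (f * f') = diagMul U act f ∘ diagMul U act f') ∧
    diagMul U act (1 : K) = id ∧
    -- in particular, `K⟨G/U⟩` is indecomposable
    ¬ ∃ P Q : Submodule K ((G ⧸ U) →₀ K),
        (∀ σ : G, ∀ x ∈ P, cosetAct U act σ x ∈ P) ∧
        (∀ σ : G, ∀ x ∈ Q, cosetAct U act σ x ∈ Q) ∧
        P ≠ ⊥ ∧ Q ≠ ⊥ ∧ P ⊓ Q = ⊥ ∧ P ⊔ Q = ⊤ := by

  refine ⟨fun f hf => diagMul_isEquivEnd U act f hf, diagMul_injOn U act,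
    fun ψ hψ => equivEnd_eq_diagMul U act hb ψ hψ,
    fun f f' _ _ => ⟨diagMul_addf U act f f', diagMul_mulf U act f f'⟩,
    diagMul_onef U act, ?_⟩
  rintro ⟨P, Q, hP, hQ, hPne, hQne, hinfPQ, hsup⟩
  have hcompl : IsCompl P Q := ⟨disjoint_iff.mpr hinfPQ, codisjoint_iff.mpr hsup⟩
  set π := Submodule.linearProjOfIsCompl P Q hcompl with hπ
  set ψ : ((G ⧸ U) →₀ K) → ((G ⧸ U) →₀ K) := fun x => ((π x : P) : (G ⧸ U) →₀ K) with hψdef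
  have hψpq : ∀ p ∈ P, ∀ q ∈ Q, ψ (p + q) = p := by
    intro p hp q hq
    have h1 : π p = ⟨p, hp⟩ := Submodule.linearProjOfIsCompl_apply_left hcompl ⟨p, hp⟩
    have h2 : π q = 0 := Submodule.linearProjOfIsCompl_apply_right' hcompl hq
    simp [hψdef, map_add, h1, h2]
  have hdecomp : ∀ x : (G ⧸ U) →₀ K, ∃ p ∈ P, ∃ q ∈ Q, x = p + q := by
    intro x
    have hx : x ∈ P ⊔ Q := by rw [hsup]; trivial
    obtain ⟨p, hp, q, hq, h⟩ := Submodule.mem_sup.mp hx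
    exact ⟨p, hp, q, hq, h.symm⟩
  have hψE : IsEquivEnd U act ψ := by
    refine ⟨fun x y => by simp [hψdef, map_add], fun c x => by simp [hψdef, map_smul], ?_⟩
    intro σ x
    obtain ⟨p, hp, q, hq, rfl⟩ := hdecomp x
    rw [hψpq p hp q hq, cosetAct_add, hψpq _ (hP σ p hp) _ (hQ σ q hq)]
  obtain ⟨f, hfix, hfeq⟩ := equivEnd_eq_diagMul U act hb ψ hψE
  have hψp : ∀ p ∈ P, ψ p = p := by
    intro p hp
    have := hψpq p hp 0 (zero_mem Q)
    simpa using this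
  have hψq : ∀ q ∈ Q, ψ q = 0 := by
    intro q hq
    have := hψpq 0 (zero_mem P) q hq
    simpa using this
  have hidem : ∀ x, ψ (ψ x) = ψ x := by
    intro x
    obtain ⟨p, hp, q, hq, rfl⟩ := hdecomp x
    rw [hψpq p hp q hq, hψp p hp]
  have hff : diagMul U act (f * f) = diagMul U act f := by
    rw [diagMul_mulf]
    funext x
    rw [Function.comp_apply, ← hfeq]
    exact hidem x
  have hfixff : ∀ u ∈ U, act u (f * f) = f * f := by
    intro u hu
    rw [map_mul, hfix u hu]
  have hf2 : f * f = f := diagMul_injOn U act hfixff hfix hff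
  have hcases : f = 0 ∨ f = 1 := by
    by_cases h0 : f = 0
    · exact Or.inl h0
    · right
      have : f * f = f * 1 := by rw [mul_one]; exact hf2
      exact mul_left_cancel₀ h0 this
  rcases hcases with h0 | h1
  · apply hPne
    refine (Submodule.eq_bot_iff P).mpr fun p hp => ?_
    have hpp := hψp p hp
    rw [hfeq, h0] at hpp
    have hz : diagMul U act (0 : K) p = 0 := by
      unfold diagMul
      simp
    rw [hz] at hpp
    exact hpp.symm
  · apply hQne
    refine (Submodule.eq_bot_iff Q).mpr fun q hq => ?_
    have hqq := hψq q hq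
    rw [hfeq, h1, diagMul_onef] at hqq
    simpa using hqq
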